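/- The number of pair partitions V of {1,...,n} that are compatible with a given sign sequence v ∈ {+,−}^n (i.e., each pair (a,z) of V with a < z has v_a = − and v_z = +) is at most 1 when the sequence is 'non-crossing forced', and in general, for any sign sequence the sum over compatible pairings of q^{|crossings(V)|} is bounded by Π_{k=1}^{p} (1 + q + ··· + q^{k-1}) ≤ (1-q)^{-p} where n = 2p and 0 ≤ q < 1. -/

import Mathlib

open scoped Classical

/-- `V` is a pair partition of `{0, …, n-1}`. -/
def IsPairing (n : ℕ) (V : Finset (Fin n × Fin n)) : Prop :=
  (∀ p ∈ V, p.1 < p.2) ∧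
    ∀ k : Fin n, ∃! p : Fin n × Fin n, p ∈ V ∧ (p.1 = k ∨ p.2 = k)

/-- The set of crossings of a pairing: pairs of pairs `(a,z), (a',z')` with
`a < a' < z < z'`. -/
def crossings (n : ℕ) (V : Finset (Fin n × Fin n)) :
    Finset ((Fin n × Fin n) × (Fin n × Fin n)) :=
  (V ×ˢ V).filter (fun c => c.1.1 < c.2.1 ∧ c.2.1 < c.1.2 ∧ c.1.2 < c.2.2)

namespace PairingAux

variable {n : ℕ} {v : Fin n → Bool} {V V' : Finset (Fin n × Fin n)}

/-- compatibility of a pairing with a sign sequence -/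
def Compat (n : ℕ) (v : Fin n → Bool) (V : Finset (Fin n × Fin n)) : Prop :=
  IsPairing n V ∧ ∀ pr ∈ V, v pr.1 = false ∧ v pr.2 = true

/-- number of crossings whose second pair has left leg `i` -/
noncomputable def cfun (n : ℕ) (V : Finset (Fin n × Fin n)) (i : Fin n) : ℕ :=
  ((crossings n V).filter (fun c => c.2.1 = i)).card

lemma uniq (h : IsPairing n V) {pr pr' : Fin n × Fin n} (hp : pr ∈ V) (hp' : pr' ∈ V)
    {k : Fin n} (h1 : pr.1 = k ∨ pr.2 = k) (h2 : pr'.1 = k ∨ pr'.2 = k) : pr = pr' := by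
  obtain ⟨u, -, hu⟩ := h.2 k
  rw [hu pr ⟨hp, h1⟩, hu pr' ⟨hp', h2⟩]

lemma pair_minus (h : Compat n v V) {i : Fin n} (hi : v i = false) :
    ∃ z, (i, z) ∈ V := by
  obtain ⟨⟨a, z⟩, ⟨hpr, hk⟩, -⟩ := h.1.2 i
  rcases hk with h1 | h2
  · simp only at h1; subst h1; exact ⟨z, hpr⟩
  · simp only at h2; subst h2
    have := (h.2 _ hpr).2
    simp only at this
    rw [this] at hi; exact absurd hi (by simp)

lemma pair_plus (h : Compat n v V) {z : Fin n} (hz : v z = true) :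
    ∃ a, (a, z) ∈ V := by
  obtain ⟨⟨a, b⟩, ⟨hpr, hk⟩, -⟩ := h.1.2 z
  rcases hk with h1 | h2
  · simp only at h1; subst h1
    have := (h.2 _ hpr).1
    simp only at this
    rw [this] at hz; exact absurd hz (by simp)
  · simp only at h2; subst h2; exact ⟨a, hpr⟩

lemma cfun_eq (h : Compat n v V) {i z : Fin n} (hz : (i, z) ∈ V) :
    cfun n V i = (V.filter (fun pr => pr.1 < i ∧ i < pr.2 ∧ pr.2 < z)).card := by
  have himg : (crossings n V).filter (fun c => c.2.1 = i)
      = (V.filter (fun pr => pr.1 < i ∧ i < pr.2 ∧ pr.2 < z)).image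
          (fun pr => (pr, (i, z))) := by
    ext c
    simp only [crossings, Finset.mem_filter, Finset.mem_product, Finset.mem_image]
    constructor
    · rintro ⟨⟨⟨hc1, hc2⟩, hlt1, hlt2, hlt3⟩, hfst⟩
      have hc2e : c.2 = (i, z) := uniq h.1 hc2 hz (Or.inl hfst) (Or.inl rfl)
      refine ⟨c.1, ⟨hc1, ?_, ?_, ?_⟩, ?_⟩
      · rw [← hfst]; exact hlt1
      · rw [← hfst]; exact hlt2
      · rw [hc2e] at hlt3; exact hlt3
      · rw [← hc2e]
    · rintro ⟨pr, ⟨hpr, h1, h2, h3⟩, rfl⟩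
      exact ⟨⟨⟨hpr, hz⟩, h1, h2, h3⟩, rfl⟩
  rw [cfun, himg, Finset.card_image_of_injOn]
  intro a _ b _ hab
  simpa using congrArg Prod.fst hab

lemma cfun_zero (h : Compat n v V) {i : Fin n} (hi : v i = true) : cfun n V i = 0 := by
  rw [cfun, Finset.card_eq_zero, Finset.filter_eq_empty_iff]
  intro c hc hci
  have hc2 : c.2 ∈ V := by
    simp only [crossings, Finset.mem_filter, Finset.mem_product] at hc
    exact hc.1.2
  have hfalse := (h.2 c.2 hc2).1
  rw [hci, hi] at hfalse
  exact absurd hfalse (by simp)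

lemma cfun_lt_of_lt (h : Compat n v V) (h' : Compat n v V')
    {i z z' : Fin n} (hz : (i, z) ∈ V) (hz' : (i, z') ∈ V') (hzz : z < z')
    (IH : ∀ j : Fin n, i < j → ∀ pr : Fin n × Fin n, pr.1 = j → (pr ∈ V ↔ pr ∈ V')) :
    cfun n V i < cfun n V' i := by
  set S := V.filter (fun pr => pr.1 < i ∧ i < pr.2 ∧ pr.2 < z) with hS
  set S' := V'.filter (fun pr => pr.1 < i ∧ i < pr.2 ∧ pr.2 < z') with hS'
  have hvz : v z = true := (h.2 _ hz).2
  obtain ⟨a₀, ha₀⟩ := pair_plus h' hvz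
  have hiz : i < z := h.1.1 _ hz
  have ha₀i : a₀ < i := by
    rcases lt_trichotomy a₀ i with hlt | heq | hgt
    · exact hlt
    · subst heq
      have : (a₀, z) = (a₀, z') := uniq h'.1 ha₀ hz' (Or.inl rfl) (Or.inl rfl)
      exact absurd (congrArg Prod.snd this) (by simpa using hzz.ne)
    · have hmV : (a₀, z) ∈ V := (IH a₀ hgt (a₀, z) rfl).mpr ha₀
      have : (a₀, z) = (i, z) := uniq h.1 hmV hz (Or.inr rfl) (Or.inr rfl)
      have : a₀ = i := congrArg Prod.fst this
      exact absurd this hgt.ne'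
  have hmem₀ : (a₀, z) ∈ S' := by
    rw [hS', Finset.mem_filter]
    exact ⟨ha₀, ha₀i, hiz, hzz⟩
  -- build the injection from S into S'.erase (a₀, z)
  have hex : ∀ pr : Fin n × Fin n, pr ∈ S → ∃ pr', pr' ∈ V' ∧ pr'.2 = pr.2 := by
    intro pr hpr
    rw [hS, Finset.mem_filter] at hpr
    obtain ⟨a, ha⟩ := pair_plus h' ((h.2 pr hpr.1).2)
    exact ⟨(a, pr.2), ha, rfl⟩
  choose! ψ hψV hψ2 using hex
  have hcard : S.card ≤ (S'.erase (a₀, z)).card := by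
    apply Finset.card_le_card_of_injOn ψ
    · intro pr hpr
      have hprS := hpr
      rw [Finset.mem_coe, hS, Finset.mem_filter] at hprS
      obtain ⟨hprV, h1, h2, h3⟩ := hprS
      have hψV' := hψV pr hpr
      have hψ2' := hψ2 pr hpr
      have hψ1 : (ψ pr).1 < i := by
        rcases lt_trichotomy (ψ pr).1 i with hlt | heq | hgt
        · exact hlt
        · have : ψ pr = (i, z') := uniq h'.1 hψV' hz' (Or.inl heq) (Or.inl rfl)
          have hsnd : (ψ pr).2 = z' := congrArg Prod.snd this
          rw [hψ2'] at hsnd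
          exact absurd hsnd (by rw [hsnd] at h3 ⊢; exact absurd (h3.trans hzz) (lt_irrefl _))
        · have hmV : ψ pr ∈ V := (IH (ψ pr).1 hgt (ψ pr) rfl).mpr hψV'
          have : ψ pr = pr := uniq h.1 hmV hprV (Or.inr hψ2') (Or.inr rfl)
          rw [this] at hgt
          exact absurd (h1.trans hgt) (lt_irrefl _)
      rw [Finset.mem_coe, Finset.mem_erase]
      constructor
      · intro hcon
        have : (ψ pr).2 = z := congrArg Prod.snd hcon
        rw [hψ2'] at this
        rw [this] at h3
        exact absurd h3 (lt_irrefl _)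
      · rw [hS', Finset.mem_filter]
        refine ⟨hψV', hψ1, ?_, ?_⟩
        · rw [hψ2']; exact h2
        · rw [hψ2']; exact h3.trans hzz
    · intro a ha b hb hab
      have ha' : a ∈ S := ha
      have hb' : b ∈ S := hb
      rw [hS, Finset.mem_filter] at ha' hb'
      have h2a := hψ2 a ha
      have h2b := hψ2 b hb
      have : a.2 = b.2 := by rw [← h2a, ← h2b, hab]
      exact uniq h.1 ha'.1 hb'.1 (Or.inr this) (Or.inr rfl)
  have hlt : (S'.erase (a₀, z)).card < S'.card :=
    Finset.card_lt_card (Finset.erase_ssubset hmem₀)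
  rw [cfun_eq h hz, cfun_eq h' hz']
  exact lt_of_le_of_lt hcard hlt

lemma eq_of_cfun (h : Compat n v V) (h' : Compat n v V')
    (hc : ∀ i, cfun n V i = cfun n V' i) : V = V' := by
  have main : ∀ m : ℕ, ∀ i : Fin n, n - (i : ℕ) ≤ m →
      ∀ pr : Fin n × Fin n, pr.1 = i → (pr ∈ V ↔ pr ∈ V') := by
    intro m
    induction m with
    | zero =>
      intro i hi
      exact absurd hi (by have := i.isLt; omega)
    | succ m ih =>
      intro i hi pr hpr
      have IH : ∀ j : Fin n, i < j → ∀ pr' : Fin n × Fin n, pr'.1 = j →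
          (pr' ∈ V ↔ pr' ∈ V') := by
        intro j hj
        have hij : (i : ℕ) < (j : ℕ) := hj
        exact ih j (by have := j.isLt; omega)
      cases hvi : v i with
      | true =>
        constructor
        · intro hm
          have := (h.2 pr hm).1
          rw [hpr, hvi] at this
          exact absurd this (by simp)
        · intro hm
          have := (h'.2 pr hm).1
          rw [hpr, hvi] at this
          exact absurd this (by simp)
      | false =>
        obtain ⟨z, hz⟩ := pair_minus h hvi
        obtain ⟨z', hz'⟩ := pair_minus h' hvi
        have hzz : z = z' := by
          rcases lt_trichotomy z z' with hlt | heq | hgt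
          · exact absurd (hc i) (Nat.ne_of_lt (cfun_lt_of_lt h h' hz hz' hlt IH))
          · exact heq
          · have IH' : ∀ j : Fin n, i < j → ∀ pr' : Fin n × Fin n, pr'.1 = j →
                (pr' ∈ V' ↔ pr' ∈ V) := fun j hj pr' hp => (IH j hj pr' hp).symm
            exact absurd (hc i).symm (Nat.ne_of_lt (cfun_lt_of_lt h' h hz' hz hgt IH'))
        subst hzz
        constructor
        · intro hm
          have : pr = (i, z) := uniq h.1 hm hz (Or.inl hpr) (Or.inl rfl)
          rw [this]; exact hz'
        · intro hm
          have : pr = (i, z) := uniq h'.1 hm hz' (Or.inl hpr) (Or.inl rfl)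
          rw [this]; exact hz
  ext pr
  exact main n pr.1 (by omega) pr rfl

lemma cfun_le (h : Compat n v V) {i z : Fin n} (hz : (i, z) ∈ V) :
    cfun n V i ≤ (Finset.univ.filter (fun j => v j = false ∧ j < i)).card := by
  rw [cfun_eq h hz]
  apply Finset.card_le_card_of_injOn Prod.fst
  · intro pr hpr
    rw [Finset.mem_coe, Finset.mem_filter] at hpr
    rw [Finset.mem_coe, Finset.mem_filter]
    exact ⟨Finset.mem_univ _, (h.2 pr hpr.1).1, hpr.2.1⟩
  · intro a ha b hb hab
    simp only [Finset.coe_filter, Set.mem_setOf_eq] at ha hb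
    exact uniq h.1 ha.1 hb.1 (Or.inl hab) (Or.inl rfl)

end PairingAux

/-- For any sign sequence `v ∈ {+,−}^{2p}` (with `+` as `true`, `−` as `false`) and
`0 ≤ q < 1`, the sum over pair partitions `V` compatible with `v` (each pair has an
annihilator `−` at its left leg and a creator `+` at its right leg) of
`q^{#crossings(V)}` is bounded by `Π_{k=1}^{p} (1 + q + ⋯ + q^{k-1}) ≤ (1-q)^{-p}`. -/
theorem compatible_pairing_crossing_sum_bound
    (p : ℕ) (q : ℝ) (hq0 : 0 ≤ q) (hq1 : q < 1) (v : Fin (2 * p) → Bool) :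
    ((∑ V ∈ Finset.univ.filter (fun V : Finset (Fin (2 * p) × Fin (2 * p)) =>
        IsPairing (2 * p) V ∧ ∀ pr ∈ V, v pr.1 = false ∧ v pr.2 = true),
        q ^ (crossings (2 * p) V).card)
      ≤ ∏ k ∈ Finset.range p, ∑ m ∈ Finset.range (k + 1), q ^ m) ∧
    ((∏ k ∈ Finset.range p, ∑ m ∈ Finset.range (k + 1), q ^ m) ≤ ((1 - q)⁻¹) ^ p) := by
  have hprod_nonneg : (0:ℝ) ≤ ∏ k ∈ Finset.range p, ∑ m ∈ Finset.range (k + 1), q ^ m :=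
    Finset.prod_nonneg fun k _ => Finset.sum_nonneg fun m _ => pow_nonneg hq0 m
  constructor
  · set F := Finset.univ.filter (fun V : Finset (Fin (2 * p) × Fin (2 * p)) =>
        IsPairing (2 * p) V ∧ ∀ pr ∈ V, v pr.1 = false ∧ v pr.2 = true) with hF
    have hcompat : ∀ V ∈ F, PairingAux.Compat (2 * p) v V := by
      intro V hV
      exact (Finset.mem_filter.mp hV).2
    rcases F.eq_empty_or_nonempty with hFe | ⟨V₀, hV₀⟩
    · rw [hFe, Finset.sum_empty]; exact hprod_nonneg
    · have hV₀c := hcompat V₀ hV₀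
      set M := Finset.univ.filter (fun j : Fin (2 * p) => v j = false) with hM
      -- cardinality of the set of minuses
      have hfstinj : Set.InjOn Prod.fst (V₀ : Set (Fin (2 * p) × Fin (2 * p))) := by
        intro a ha b hb hab
        exact PairingAux.uniq hV₀c.1 ha hb (Or.inl hab) (Or.inl rfl)
      have hsndinj : Set.InjOn Prod.snd (V₀ : Set (Fin (2 * p) × Fin (2 * p))) := by
        intro a ha b hb hab
        exact PairingAux.uniq hV₀c.1 ha hb (Or.inr hab) (Or.inr rfl)
      have hfst : M = V₀.image Prod.fst := by
        ext i
        simp only [hM, Finset.mem_filter, Finset.mem_univ, true_and, Finset.mem_image]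
        constructor
        · intro hi
          obtain ⟨z, hz⟩ := PairingAux.pair_minus hV₀c hi
          exact ⟨(i, z), hz, rfl⟩
        · rintro ⟨pr, hpr, rfl⟩
          exact (hV₀c.2 pr hpr).1
      have hsnd : Finset.univ.filter (fun j : Fin (2 * p) => v j = true)
          = V₀.image Prod.snd := by
        ext i
        simp only [Finset.mem_filter, Finset.mem_univ, true_and, Finset.mem_image]
        constructor
        · intro hi
          obtain ⟨a, ha⟩ := PairingAux.pair_plus hV₀c hi
          exact ⟨(a, i), ha, rfl⟩
        · rintro ⟨pr, hpr, rfl⟩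
          exact (hV₀c.2 pr hpr).2
      have hMcard : M.card = p := by
        have hdisj : Disjoint M (Finset.univ.filter (fun j : Fin (2 * p) => v j = true)) := by
          rw [Finset.disjoint_left]
          intro j hjM hjT
          rw [hM, Finset.mem_filter] at hjM
          rw [Finset.mem_filter] at hjT
          rw [hjM.2] at hjT
          exact absurd hjT.2 (by simp)
        have huniv : M ∪ Finset.univ.filter (fun j : Fin (2 * p) => v j = true)
            = Finset.univ := by
          apply Finset.eq_univ_of_forall
          intro j
          rw [Finset.mem_union, hM, Finset.mem_filter, Finset.mem_filter]
          cases hvj : v j with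
          | false => exact Or.inl ⟨Finset.mem_univ _, rfl⟩
          | true => exact Or.inr ⟨Finset.mem_univ _, rfl⟩
        have hsplit := Finset.card_union_of_disjoint hdisj
        rw [huniv] at hsplit
        have h1 : M.card = V₀.card := by rw [hfst, Finset.card_image_of_injOn hfstinj]
        have h2 : (Finset.univ.filter (fun j : Fin (2 * p) => v j = true)).card = V₀.card := by
          rw [hsnd, Finset.card_image_of_injOn hsndinj]
        have h3 : (Finset.univ : Finset (Fin (2 * p))).card = 2 * p := by simp
        omega
      set e := M.orderIsoOfFin hMcard with he
      -- rank bound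
      have hrank : ∀ k : Fin p,
          (Finset.univ.filter (fun j : Fin (2 * p) => v j = false ∧ j < (e k : Fin (2 * p)))).card
            ≤ (k : ℕ) := by
        intro k
        have := Finset.card_le_card_of_injOn
          (f := fun j : Fin (2 * p) => if hj : j ∈ M then ((e.symm ⟨j, hj⟩ : Fin p) : ℕ) else 0)
          (s := Finset.univ.filter (fun j : Fin (2 * p) => v j = false ∧ j < (e k : Fin (2 * p))))
          (t := Finset.range (k : ℕ)) ?_ ?_
        · simpa using this
        · intro j hj
          rw [Finset.mem_coe, Finset.mem_filter] at hj
          have hjM : j ∈ M := by rw [hM, Finset.mem_filter]; exact ⟨Finset.mem_univ _, hj.2.1⟩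
          simp only [dif_pos hjM, Finset.mem_coe, Finset.mem_range]
          have hsub : (⟨j, hjM⟩ : {x // x ∈ M}) < e k := by
            rw [Subtype.mk_lt_mk]
            exact hj.2.2
          have : e.symm ⟨j, hjM⟩ < e.symm (e k) := e.symm.lt_iff_lt.mpr hsub
          rw [OrderIso.symm_apply_apply] at this
          exact this
        · intro a ha b hb hab
          simp only [Finset.coe_filter, Set.mem_setOf_eq] at ha hb
          have haM : a ∈ M := by rw [hM, Finset.mem_filter]; exact ⟨Finset.mem_univ _, ha.2.1⟩
          have hbM : b ∈ M := by rw [hM, Finset.mem_filter]; exact ⟨Finset.mem_univ _, hb.2.1⟩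
          simp only [dif_pos haM, dif_pos hbM] at hab
          have : e.symm ⟨a, haM⟩ = e.symm ⟨b, hbM⟩ := Fin.val_injective hab
          have := e.symm.injective this
          exact congrArg Subtype.val this
      -- cfun values at e k are small
      have hsmall : ∀ V ∈ F, ∀ k : Fin p,
          PairingAux.cfun (2 * p) V (e k : Fin (2 * p)) ≤ (k : ℕ) := by
        intro V hV k
        have hVc := hcompat V hV
        have hek : v (e k : Fin (2 * p)) = false :=
          (Finset.mem_filter.mp (e k).2).2
        obtain ⟨z, hz⟩ := PairingAux.pair_minus hVc hek
        exact le_trans (PairingAux.cfun_le hVc hz) (hrank k)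
      -- rewrite q^crossings as a product
      have key1 : ∀ V ∈ F, q ^ (crossings (2 * p) V).card
          = ∏ k : Fin p, q ^ (PairingAux.cfun (2 * p) V (e k : Fin (2 * p))) := by
        intro V hV
        have hVc := hcompat V hV
        have hsum : (crossings (2 * p) V).card
            = ∑ k : Fin p, PairingAux.cfun (2 * p) V (e k : Fin (2 * p)) := by
          have h1 : (crossings (2 * p) V).card
              = ∑ i : Fin (2 * p), PairingAux.cfun (2 * p) V i :=
            Finset.card_eq_sum_card_fiberwise (fun c _ => Finset.mem_univ c.2.1)
          rw [h1]
          have h2 : ∑ i : Fin (2 * p), PairingAux.cfun (2 * p) V i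
              = ∑ i ∈ M, PairingAux.cfun (2 * p) V i := by
            symm
            apply Finset.sum_subset (Finset.subset_univ M)
            intro i _ hiM
            apply PairingAux.cfun_zero hVc
            have : ¬ v i = false := by
              intro hcon
              exact hiM (by rw [hM, Finset.mem_filter]; exact ⟨Finset.mem_univ _, hcon⟩)
            simpa using this
          rw [h2, ← Finset.sum_coe_sort M (fun i => PairingAux.cfun (2 * p) V i)]
          exact (Fintype.sum_equiv e.toEquiv
            (fun k => PairingAux.cfun (2 * p) V (e k : Fin (2 * p)))
            (fun x => PairingAux.cfun (2 * p) V (x : Fin (2 * p))) (fun k => rfl)).symm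
        rw [hsum]
        exact (Finset.prod_pow_eq_pow_sum Finset.univ _ q).symm
      -- the injection into tuples
      have key3 : Set.InjOn
          (fun V : Finset (Fin (2 * p) × Fin (2 * p)) =>
            fun k : Fin p => PairingAux.cfun (2 * p) V (e k : Fin (2 * p)))
          (F : Set (Finset (Fin (2 * p) × Fin (2 * p)))) := by
        intro V hV V' hV' hΦ
        apply PairingAux.eq_of_cfun (hcompat V hV) (hcompat V' hV')
        intro i
        cases hvi : v i with
        | true =>
          rw [PairingAux.cfun_zero (hcompat V hV) hvi,
            PairingAux.cfun_zero (hcompat V' hV') hvi]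
        | false =>
          have hiM : i ∈ M := by rw [hM, Finset.mem_filter]; exact ⟨Finset.mem_univ _, hvi⟩
          have := congrFun hΦ (e.symm ⟨i, hiM⟩)
          simpa using this
      calc ∑ V ∈ F, q ^ (crossings (2 * p) V).card
          = ∑ V ∈ F, ∏ k : Fin p,
              q ^ (PairingAux.cfun (2 * p) V (e k : Fin (2 * p))) :=
            Finset.sum_congr rfl key1
        _ = ∑ c ∈ F.image (fun V => fun k : Fin p =>
              PairingAux.cfun (2 * p) V (e k : Fin (2 * p))),
              ∏ k : Fin p, q ^ (c k) := by
            rw [Finset.sum_image (fun x hx y hy hxy => key3 hx hy hxy)]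
        _ ≤ ∑ c ∈ Fintype.piFinset (fun k : Fin p => Finset.range ((k : ℕ) + 1)),
              ∏ k : Fin p, q ^ (c k) := by
            apply Finset.sum_le_sum_of_subset_of_nonneg
            · intro c hc
              rw [Finset.mem_image] at hc
              obtain ⟨V, hV, rfl⟩ := hc
              rw [Fintype.mem_piFinset]
              intro k
              rw [Finset.mem_range, Nat.lt_succ_iff]
              exact hsmall V hV k
            · intro c _ _
              exact Finset.prod_nonneg fun k _ => pow_nonneg hq0 _
        _ = ∏ k : Fin p, ∑ m ∈ Finset.range ((k : ℕ) + 1), q ^ m :=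
            (Finset.prod_univ_sum _ _).symm
        _ = ∏ k ∈ Finset.range p, ∑ m ∈ Finset.range (k + 1), q ^ m :=
            Fin.prod_univ_eq_prod_range (fun k => ∑ m ∈ Finset.range (k + 1), q ^ m) p
  · have h1q : (0:ℝ) < 1 - q := by linarith
    have hfac : ∀ k : ℕ, ∑ m ∈ Finset.range (k + 1), q ^ m ≤ (1 - q)⁻¹ := by
      intro k
      rw [geom_sum_eq (ne_of_lt hq1)]
      have heq : (q ^ (k + 1) - 1) / (q - 1) = (1 - q ^ (k + 1)) / (1 - q) := by
        rw [div_eq_div_iff (by linarith : q - 1 ≠ 0) (by linarith : 1 - q ≠ 0)]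
        ring
      rw [heq, inv_eq_one_div]
      have h1 : 1 - q ^ (k + 1) ≤ 1 := by
        have := pow_nonneg hq0 (k + 1); linarith
      gcongr
    calc ∏ k ∈ Finset.range p, ∑ m ∈ Finset.range (k + 1), q ^ m
        ≤ ∏ k ∈ Finset.range p, (1 - q)⁻¹ :=
          Finset.prod_le_prod
            (fun k _ => Finset.sum_nonneg fun m _ => pow_nonneg hq0 m)
            (fun k _ => hfac k)
      _ = ((1 - q)⁻¹) ^ p := by rw [Finset.prod_const, Finset.card_range]
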